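/- arXiv:2604.10205 — 2 statements merged into one kernel-verified Lean document; each statement's English description precedes it below -/
import Mathlib

section
/- Fix a community assignment z ∈ [k]^n and for 1 ≤ a ≤ b ≤ k let n_{ab}(z) be the number of potential edges between communities a and b (n_a n_b if a ≠ b, and n_a(n_a - 1)/2 if a = b, where n_a is the size of community a). Then the Shtarkov sum of the conditional SBM likelihood satisfies ∑_{x} sup_{P symmetric in [0,1]^{k×k}} P(x | z) = ∏_{a ≤ b} C_MN(n_{ab}(z), 2), where the sum is over all simple undirected graphs x on n labeled vertices, P(x|z) = ∏_{a ≤ b} P_{ab}^{o_{ab}(x,z)} (1 - P_{ab})^{n_{ab}(z) - o_{ab}(x,z)} with o_{ab}(x,z) the number of edges of x between communities a and b, and C_MN(m,2) = ∑_{t=0}^m binom(m,t)(t/m)^t(1-t/m)^{m-t}. -/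
open Finset

/-- The Bernoulli Shtarkov sum `C_MN(m,2)` with the convention `0^0 = 1`. -/
noncomputable def CMN2 (m : ℕ) : ℝ :=
  ∑ t ∈ Finset.range (m + 1),
    (m.choose t : ℝ) * ((t : ℝ) / m) ^ t * (1 - (t : ℝ) / m) ^ (m - t)

/-- Number of potential edges between communities `ab.1` and `ab.2` under assignment `z`. -/
def nabSBM (n k : ℕ) (z : Fin n → Fin k) (ab : Fin k × Fin k) : ℕ :=
  (Finset.univ.filter (fun p : {p : Fin n × Fin n // p.1 < p.2} =>
    min (z p.1.1) (z p.1.2) = ab.1 ∧ max (z p.1.1) (z p.1.2) = ab.2)).card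

/-- Number of edges of the graph `x` between communities `ab.1` and `ab.2`. -/
def oabSBM (n k : ℕ) (z : Fin n → Fin k) (x : {p : Fin n × Fin n // p.1 < p.2} → Bool)
    (ab : Fin k × Fin k) : ℕ :=
  (Finset.univ.filter (fun p : {p : Fin n × Fin n // p.1 < p.2} =>
    (min (z p.1.1) (z p.1.2) = ab.1 ∧ max (z p.1.1) (z p.1.2) = ab.2) ∧ x p = true)).card

/-! ### Auxiliary lemmas -/

/-- The Bernoulli likelihood is maximized at the empirical frequency. -/
private lemma bern_le {m o : ℕ} (ho : o ≤ m) {p : ℝ} (hp0 : 0 ≤ p) (hp1 : p ≤ 1) :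
    p ^ o * (1 - p) ^ (m - o) ≤ ((o : ℝ) / m) ^ o * (1 - (o : ℝ) / m) ^ (m - o) := by
  rcases Nat.eq_zero_or_pos m with hm | hm
  · subst hm; interval_cases o; simp
  rcases Nat.eq_zero_or_pos o with ho0 | ho0
  · subst ho0
    simp only [pow_zero, one_mul, Nat.cast_zero, zero_div, sub_zero, Nat.sub_zero, one_pow]
    exact pow_le_one₀ (by linarith) (by linarith)
  rcases eq_or_lt_of_le ho with rfl | hom
  · have : ((o:ℝ)/o) = 1 := div_self (by positivity)
    simp only [Nat.sub_self, pow_zero, mul_one, this, one_pow]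
    exact pow_le_one₀ hp0 hp1
  -- now 0 < o < m
  have hmR : (0:ℝ) < m := by exact_mod_cast hm
  have hoR : (0:ℝ) < o := by exact_mod_cast ho0
  have hmoR : (0:ℝ) < ((m - o : ℕ) : ℝ) := by exact_mod_cast Nat.sub_pos_of_lt hom
  set w1 : ℝ := (o:ℝ)/m with hw1
  set w2 : ℝ := ((m-o:ℕ):ℝ)/m with hw2
  have hcast : ((m - o : ℕ) : ℝ) = (m:ℝ) - o := by
    push_cast [ho]; ring
  have hw1pos : 0 < w1 := by positivity
  have hw2pos : 0 < w2 := by positivity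
  have hsum : w1 + w2 = 1 := by rw [hw1, hw2, hcast]; field_simp; ring
  have h1w : 1 - w1 = w2 := by linarith
  rw [h1w]
  set q1 : ℝ := p / w1 with hq1def
  set q2 : ℝ := (1 - p) / w2 with hq2def
  have hq1 : 0 ≤ q1 := div_nonneg hp0 hw1pos.le
  have hq2 : 0 ≤ q2 := div_nonneg (by linarith) hw2pos.le
  have key : q1 ^ w1 * q2 ^ w2 ≤ 1 := by
    calc q1 ^ w1 * q2 ^ w2 ≤ w1 * q1 + w2 * q2 :=
          Real.geom_mean_le_arith_mean2_weighted hw1pos.le hw2pos.le hq1 hq2 hsum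
      _ = 1 := by
          rw [hq1def, hq2def, mul_div_cancel₀ _ hw1pos.ne', mul_div_cancel₀ _ hw2pos.ne']
          ring
  have key2 : q1 ^ o * q2 ^ (m - o) ≤ 1 := by
    have h := pow_le_pow_left₀ (by positivity) key m
    rw [one_pow, mul_pow, ← Real.rpow_natCast (q1 ^ w1) m, ← Real.rpow_natCast (q2 ^ w2) m,
        ← Real.rpow_mul hq1, ← Real.rpow_mul hq2] at h
    have e1 : w1 * (m:ℝ) = (o:ℕ) := by rw [hw1]; field_simp
    have e2 : w2 * (m:ℝ) = ((m-o:ℕ):ℝ) := by rw [hw2]; field_simp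
    rw [e1, e2, Real.rpow_natCast, Real.rpow_natCast] at h
    exact h
  have hp' : p = w1 * q1 := by rw [hq1def, mul_div_cancel₀ _ hw1pos.ne']
  have hp'' : 1 - p = w2 * q2 := by rw [hq2def, mul_div_cancel₀ _ hw2pos.ne']
  calc p ^ o * (1 - p) ^ (m - o) = (w1 ^ o * w2 ^ (m - o)) * (q1 ^ o * q2 ^ (m - o)) := by
        rw [hp'', hp', mul_pow, mul_pow]; ring
    _ ≤ (w1 ^ o * w2 ^ (m - o)) * 1 :=
        mul_le_mul_of_nonneg_left key2 (by positivity)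
    _ = w1 ^ o * w2 ^ (m - o) := mul_one _

/-- The class map sending a potential edge to its (ordered) pair of communities. -/
private def cSBM (n k : ℕ) (z : Fin n → Fin k) (e : {p : Fin n × Fin n // p.1 < p.2}) :
    Fin k × Fin k :=
  (min (z e.1.1) (z e.1.2), max (z e.1.1) (z e.1.2))

private lemma nab_eq (n k : ℕ) (z : Fin n → Fin k) (ab : Fin k × Fin k) :
    nabSBM n k z ab = (univ.filter (fun e => cSBM n k z e = ab)).card := by
  unfold nabSBM
  congr 1
  apply filter_congr
  intro e _
  simp [cSBM, Prod.ext_iff]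

private lemma oab_eq (n k : ℕ) (z : Fin n → Fin k) (x : {p : Fin n × Fin n // p.1 < p.2} → Bool)
    (ab : Fin k × Fin k) :
    oabSBM n k z x ab
      = (univ.filter (fun e : {e // cSBM n k z e = ab} => x e.1 = true)).card := by
  unfold oabSBM
  rw [← Fintype.card_subtype, ← Fintype.card_subtype]
  have hiff : ∀ e : {p : Fin n × Fin n // p.1 < p.2},
      ((min (z e.1.1) (z e.1.2) = ab.1 ∧ max (z e.1.1) (z e.1.2) = ab.2) ∧ x e = true)
        ↔ (cSBM n k z e = ab ∧ x e = true) := by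
    intro e
    rw [show cSBM n k z e = ab ↔ _ from Prod.ext_iff]
    rfl
  exact Fintype.card_congr
    ((Equiv.subtypeEquivRight hiff).trans
      (Equiv.subtypeSubtypeEquivSubtypeInter
        (fun e => cSBM n k z e = ab) (fun e => x e = true)).symm)

private lemma oab_le (n k : ℕ) (z : Fin n → Fin k) (x : {p : Fin n × Fin n // p.1 < p.2} → Bool)
    (ab : Fin k × Fin k) : oabSBM n k z x ab ≤ nabSBM n k z ab :=
  card_le_card (monotone_filter_right _ (fun _ _ h => h.1))

/-- Computation of the supremum of the conditional likelihood: it is attained at the MLE. -/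
private lemma sup_step (n k : ℕ) (z : Fin n → Fin k)
    (x : {p : Fin n × Fin n // p.1 < p.2} → Bool) :
    (⨆ P : {P : Fin k → Fin k → ℝ //
        (∀ a b, P a b ∈ Set.Icc (0 : ℝ) 1) ∧ (∀ a b, P a b = P b a)},
      ∏ ab ∈ Finset.univ.filter (fun ab : Fin k × Fin k => ab.1 ≤ ab.2),
        (P.1 ab.1 ab.2) ^ (oabSBM n k z x ab) *
          (1 - P.1 ab.1 ab.2) ^ (nabSBM n k z ab - oabSBM n k z x ab)) =
      ∏ ab ∈ Finset.univ.filter (fun ab : Fin k × Fin k => ab.1 ≤ ab.2),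
        ((oabSBM n k z x ab : ℝ) / (nabSBM n k z ab)) ^ (oabSBM n k z x ab) *
          (1 - (oabSBM n k z x ab : ℝ) / (nabSBM n k z ab)) ^
            (nabSBM n k z ab - oabSBM n k z x ab) := by
  haveI : Nonempty {P : Fin k → Fin k → ℝ //
      (∀ a b, P a b ∈ Set.Icc (0 : ℝ) 1) ∧ (∀ a b, P a b = P b a)} :=
    ⟨⟨fun _ _ => 0, fun _ _ => ⟨le_refl 0, zero_le_one⟩, fun _ _ => rfl⟩⟩
  set S := Finset.univ.filter (fun ab : Fin k × Fin k => ab.1 ≤ ab.2) with hS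
  set V := ∏ ab ∈ S,
        ((oabSBM n k z x ab : ℝ) / (nabSBM n k z ab)) ^ (oabSBM n k z x ab) *
          (1 - (oabSBM n k z x ab : ℝ) / (nabSBM n k z ab)) ^
            (nabSBM n k z ab - oabSBM n k z x ab) with hV
  have hub : ∀ P : {P : Fin k → Fin k → ℝ //
      (∀ a b, P a b ∈ Set.Icc (0 : ℝ) 1) ∧ (∀ a b, P a b = P b a)},
      (∏ ab ∈ S, (P.1 ab.1 ab.2) ^ (oabSBM n k z x ab) *
          (1 - P.1 ab.1 ab.2) ^ (nabSBM n k z ab - oabSBM n k z x ab)) ≤ V := by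
    intro P
    refine Finset.prod_le_prod (fun ab _ => ?_) (fun ab _ => ?_)
    · exact mul_nonneg (pow_nonneg (P.2.1 ab.1 ab.2).1 _)
        (pow_nonneg (by have := (P.2.1 ab.1 ab.2).2; linarith) _)
    · exact bern_le (oab_le n k z x ab) (P.2.1 ab.1 ab.2).1 (P.2.1 ab.1 ab.2).2
  refine le_antisymm (ciSup_le hub) ?_
  set P0 : Fin k → Fin k → ℝ := fun a b =>
    (oabSBM n k z x (min a b, max a b) : ℝ) / (nabSBM n k z (min a b, max a b)) with hP0
  have hP0mem : ∀ a b, P0 a b ∈ Set.Icc (0 : ℝ) 1 := by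
    intro a b
    exact ⟨div_nonneg (Nat.cast_nonneg _) (Nat.cast_nonneg _),
      div_le_one_of_le₀ (Nat.cast_le.mpr (oab_le n k z x _)) (Nat.cast_nonneg _)⟩
  have hP0symm : ∀ a b, P0 a b = P0 b a := by
    intro a b; simp only [hP0, min_comm a b, max_comm a b]
  have hval : (∏ ab ∈ S, (P0 ab.1 ab.2) ^ (oabSBM n k z x ab) *
      (1 - P0 ab.1 ab.2) ^ (nabSBM n k z ab - oabSBM n k z x ab)) = V := by
    refine Finset.prod_congr rfl (fun ab hab => ?_)
    have h : ab.1 ≤ ab.2 := (Finset.mem_filter.mp hab).2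
    have he : P0 ab.1 ab.2 = (oabSBM n k z x ab : ℝ) / (nabSBM n k z ab) := by
      simp only [hP0, min_eq_left h, max_eq_right h]
    rw [he]
  have hbdd : BddAbove (Set.range (fun P : {P : Fin k → Fin k → ℝ //
      (∀ a b, P a b ∈ Set.Icc (0 : ℝ) 1) ∧ (∀ a b, P a b = P b a)} =>
      ∏ ab ∈ S, (P.1 ab.1 ab.2) ^ (oabSBM n k z x ab) *
        (1 - P.1 ab.1 ab.2) ^ (nabSBM n k z ab - oabSBM n k z x ab))) := by
    refine ⟨V, ?_⟩
    rintro v ⟨P, rfl⟩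
    exact hub P
  calc V = _ := hval.symm
    _ ≤ _ := le_ciSup hbdd ⟨P0, hP0mem, hP0symm⟩

/-- Summing a function of the number of `true`s over all boolean functions. -/
private lemma sum_bool_fun {F : Type*} [Fintype F] [DecidableEq F] (G : ℕ → ℝ) :
    ∑ y : F → Bool, G ((univ.filter (fun e => y e = true)).card)
      = ∑ t ∈ range (Fintype.card F + 1), ((Fintype.card F).choose t : ℝ) * G t := by
  have h1 : ∑ y : F → Bool, G ((univ.filter (fun e => y e = true)).card)
      = ∑ s ∈ (univ : Finset F).powerset, G s.card := by
    refine Finset.sum_nbij' (fun y => univ.filter (fun e => y e = true))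
      (fun s => fun e => decide (e ∈ s)) ?_ ?_ ?_ ?_ ?_
    · intro y _; simp
    · intro s _; simp
    · intro y _; funext e; simp
    · intro s _; ext e; simp
    · intro y _; rfl
  rw [h1, Finset.sum_powerset_apply_card, card_univ]
  refine Finset.sum_congr rfl fun t _ => ?_
  rw [nsmul_eq_mul]

/-- The sum-product exchange over community classes. -/
private lemma sum_step (n k : ℕ) (z : Fin n → Fin k) (g : Fin k × Fin k → ℕ → ℝ)
    (hg : ∀ ab : Fin k × Fin k, ab.1 ≤ ab.2 →
      (∑ t ∈ range (nabSBM n k z ab + 1), ((nabSBM n k z ab).choose t : ℝ) * g ab t)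
        = CMN2 (nabSBM n k z ab)) :
    (∑ x : {p : Fin n × Fin n // p.1 < p.2} → Bool,
      ∏ ab ∈ Finset.univ.filter (fun ab : Fin k × Fin k => ab.1 ≤ ab.2),
        g ab (oabSBM n k z x ab)) =
    ∏ ab ∈ Finset.univ.filter (fun ab : Fin k × Fin k => ab.1 ≤ ab.2),
      CMN2 (nabSBM n k z ab) := by
  set c := cSBM n k z with hc
  set ε : ({p : Fin n × Fin n // p.1 < p.2} → Bool) ≃
      (∀ i : Fin k × Fin k, {e // c e = i} → Bool) :=
    (Equiv.arrowCongr (Equiv.sigmaFiberEquiv c).symm (Equiv.refl Bool)).trans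
      (Equiv.piCurry fun _ _ => Bool) with hε
  rw [Fintype.sum_equiv ε _
    (fun y => ∏ ab ∈ Finset.univ.filter (fun ab : Fin k × Fin k => ab.1 ≤ ab.2),
      g ab ((univ.filter (fun e : {e // c e = ab} => y ab e = true)).card))
    (fun x => Finset.prod_congr rfl (fun ab _ => by rw [oab_eq]; rfl))]
  simp only [Finset.prod_filter]
  rw [← Fintype.piFinset_univ,
    ← Finset.prod_univ_sum (fun _ => (univ : Finset ({e // c e = _} → Bool)))
      (fun i yi => if i.1 ≤ i.2 then g i ((univ.filter (fun e => yi e = true)).card) else 1)]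
  refine Finset.prod_congr rfl (fun i _ => ?_)
  by_cases h : i.1 ≤ i.2
  · simp only [if_pos h]
    rw [sum_bool_fun (g i)]
    have hcard : Fintype.card {e // c e = i} = nabSBM n k z i := by
      rw [Fintype.card_subtype, nab_eq]
    rw [hcard, hg i h]
  · simp only [if_neg h]
    haveI : IsEmpty {e // c e = i} := by
      refine ⟨fun e => h ?_⟩
      rw [← e.2]
      exact min_le_max
    rw [Finset.sum_const, card_univ, Fintype.card_fun]
    simp

/-- The Shtarkov sum of the conditional SBM likelihood given the community assignment `z`
factorizes as a product over community pairs of Bernoulli Shtarkov sums: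
`∑_x sup_P P(x|z) = ∏_{a ≤ b} C_MN(n_{ab}(z), 2)`. -/
theorem sbm_conditional_shtarkov_factorization (n k : ℕ) (hn : 1 ≤ n) (hk : 1 ≤ k)
    (z : Fin n → Fin k) :
    (∑ x : {p : Fin n × Fin n // p.1 < p.2} → Bool,
      ⨆ P : {P : Fin k → Fin k → ℝ //
          (∀ a b, P a b ∈ Set.Icc (0 : ℝ) 1) ∧ (∀ a b, P a b = P b a)},
        ∏ ab ∈ Finset.univ.filter (fun ab : Fin k × Fin k => ab.1 ≤ ab.2),
          (P.1 ab.1 ab.2) ^ (oabSBM n k z x ab) *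
            (1 - P.1 ab.1 ab.2) ^ (nabSBM n k z ab - oabSBM n k z x ab)) =
      ∏ ab ∈ Finset.univ.filter (fun ab : Fin k × Fin k => ab.1 ≤ ab.2),
        CMN2 (nabSBM n k z ab) := by
  rw [Finset.sum_congr rfl (fun x _ => sup_step n k z x)]
  refine sum_step n k z
    (fun ab t => ((t : ℝ) / (nabSBM n k z ab)) ^ t *
      (1 - (t : ℝ) / (nabSBM n k z ab)) ^ (nabSBM n k z ab - t)) (fun ab _ => ?_)
  unfold CMN2
  refine Finset.sum_congr rfl (fun t _ => ?_)
  ring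
end

section
/- For every integers n ≥ 2 and k ≥ 1, the multinomial Shtarkov sum C_MN(n, k) = ∑_{e ∈ [k]^n} ∏_{a=1}^k (n_a(e)/n)^{n_a(e)} satisfies 1 ≤ C_MN(n, k) and log C_MN(n, k) ≤ ((k-1)/2) log n + c_k for a constant c_k depending only on k. -/
open Finset

/-- The multinomial Shtarkov sum `C_MN(n, k) = ∑_{e : [k]^n} ∏_a (n_a(e)/n)^(n_a(e))`. -/
noncomputable def CMN (n k : ℕ) : ℝ :=
  ∑ e : Fin n → Fin k, ∏ a : Fin k,
    (((Finset.univ.filter (fun i => e i = a)).card : ℝ) / n) ^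
      (Finset.univ.filter (fun i => e i = a)).card

noncomputable def W (N k : ℕ) (ι : Type) [Fintype ι] [DecidableEq ι] : ℝ :=
  ∑ e : ι → Fin k, ∏ a : Fin k,
    (((Finset.univ.filter (fun i => e i = a)).card : ℝ) / N) ^
      (Finset.univ.filter (fun i => e i = a)).card

lemma W_equiv {ι κ : Type} [Fintype ι] [DecidableEq ι] [Fintype κ] [DecidableEq κ]
    (N k : ℕ) (ε : ι ≃ κ) : W N k ι = W N k κ := by
  rw [W, W]
  apply Fintype.sum_equiv (Equiv.arrowCongr ε (Equiv.refl (Fin k)))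
  intro e
  apply Finset.prod_congr rfl
  intro a _
  have hcard : (Finset.univ.filter (fun i : ι => e i = a)).card
      = (Finset.univ.filter (fun j : κ => (Equiv.arrowCongr ε (Equiv.refl (Fin k))) e j = a)).card := by
    apply Finset.card_bij (fun i _ => ε i)
    · intro i hi
      simp only [mem_filter, mem_univ, true_and] at hi ⊢
      simpa using hi
    · intro i _ j _ h
      exact ε.injective h
    · intro j hj
      refine ⟨ε.symm j, ?_, by simp⟩
      simp only [mem_filter, mem_univ, true_and] at hj ⊢
      simpa using hj
  rw [hcard]

section

variable {ι : Type} [Fintype ι] [DecidableEq ι]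

lemma sum_counts (k : ℕ) (e : ι → Fin k) :
    ∑ a : Fin k, (Finset.univ.filter (fun i => e i = a)).card = Fintype.card ι := by
  rw [← Finset.card_univ]
  exact (Finset.card_eq_sum_card_fiberwise (fun x _ => Finset.mem_univ (e x))).symm

lemma count_le (k : ℕ) (e : ι → Fin k) (a : Fin k) :
    (Finset.univ.filter (fun i => e i = a)).card ≤ Fintype.card ι :=
  le_trans (Finset.card_filter_le _ _) (le_of_eq Finset.card_univ)

lemma term_normalize (N k : ℕ) (e : ι → Fin k) :
    ∏ a : Fin k, (((Finset.univ.filter (fun i => e i = a)).card : ℝ) / N) ^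
      (Finset.univ.filter (fun i => e i = a)).card
    = ((Fintype.card ι : ℝ) / N) ^ (Fintype.card ι) *
      ∏ a : Fin k, (((Finset.univ.filter (fun i => e i = a)).card : ℝ) / (Fintype.card ι)) ^
        (Finset.univ.filter (fun i => e i = a)).card := by
  set M := Fintype.card ι with hM
  have key : ∀ a : Fin k,
      (((Finset.univ.filter (fun i => e i = a)).card : ℝ) / N) ^
        (Finset.univ.filter (fun i => e i = a)).card
      = (((Finset.univ.filter (fun i => e i = a)).card : ℝ) / M) ^
          (Finset.univ.filter (fun i => e i = a)).card *
        ((M : ℝ) / N) ^ (Finset.univ.filter (fun i => e i = a)).card := by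
    intro a
    set c := (Finset.univ.filter (fun i => e i = a)).card with hc
    rcases Nat.eq_zero_or_pos c with h | h
    · simp [h]
    · have hMpos : 0 < M := lt_of_lt_of_le h (count_le k e a)
      rw [← mul_pow]
      congr 1
      field_simp
  calc ∏ a : Fin k, (((Finset.univ.filter (fun i => e i = a)).card : ℝ) / N) ^
        (Finset.univ.filter (fun i => e i = a)).card
      = ∏ a : Fin k, ((((Finset.univ.filter (fun i => e i = a)).card : ℝ) / M) ^
          (Finset.univ.filter (fun i => e i = a)).card *
        ((M : ℝ) / N) ^ (Finset.univ.filter (fun i => e i = a)).card) :=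
        Finset.prod_congr rfl (fun a _ => key a)
    _ = (∏ a : Fin k, (((Finset.univ.filter (fun i => e i = a)).card : ℝ) / M) ^
          (Finset.univ.filter (fun i => e i = a)).card) *
        ∏ a : Fin k, ((M : ℝ) / N) ^ (Finset.univ.filter (fun i => e i = a)).card :=
        Finset.prod_mul_distrib
    _ = _ := by
        rw [Finset.prod_pow_eq_pow_sum, sum_counts, mul_comm]

end

section
lemma card_filter_subtype {ι : Type} [Fintype ι] [DecidableEq ι] (s : Finset ι)
    (p : ι → Prop) [DecidablePred p] (hp : ∀ i, p i → i ∈ s) :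
    (Finset.univ.filter (fun j : {i : ι // i ∈ s} => p ↑j)).card
      = (Finset.univ.filter p).card := by
  apply Finset.card_bij (fun (j : {i : ι // i ∈ s}) _ => (j : ι))
  · intro j hj
    rw [Finset.mem_filter] at hj ⊢
    exact ⟨Finset.mem_univ _, hj.2⟩
  · intro j _ j' _ h
    exact Subtype.ext h
  · intro x hx
    rw [Finset.mem_filter] at hx
    refine ⟨⟨x, hp x hx.2⟩, ?_, rfl⟩
    rw [Finset.mem_filter]
    exact ⟨Finset.mem_univ _, hx.2⟩

variable {ι : Type} [Fintype ι] [DecidableEq ι]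

lemma W_succ (N k : ℕ) :
    W N (k+1) ι = ∑ S : Finset ι,
      ((S.card : ℝ)/N)^S.card * W N k {i : ι // i ∈ Sᶜ} := by
  rw [W]
  -- split the product
  have hsplit : ∀ e : ι → Fin (k+1),
      ∏ a : Fin (k+1), (((Finset.univ.filter (fun i => e i = a)).card : ℝ) / N) ^
        (Finset.univ.filter (fun i => e i = a)).card
      = (∏ a : Fin k, (((Finset.univ.filter (fun i => e i = a.castSucc)).card : ℝ) / N) ^
          (Finset.univ.filter (fun i => e i = a.castSucc)).card) *
        (((Finset.univ.filter (fun i => e i = Fin.last k)).card : ℝ) / N) ^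
          (Finset.univ.filter (fun i => e i = Fin.last k)).card := by
    intro e
    exact Fin.prod_univ_castSucc _
  rw [Finset.sum_congr rfl (fun e _ => hsplit e)]
  -- group by fiber of last
  rw [← Finset.sum_fiberwise_of_maps_to
    (fun (e : ι → Fin (k+1)) _ => Finset.mem_univ (Finset.univ.filter (fun i => e i = Fin.last k)))]
  apply Finset.sum_congr rfl
  intro S _
  have hconst : ∀ e ∈ Finset.univ.filter
      (fun e : ι → Fin (k+1) => Finset.univ.filter (fun i => e i = Fin.last k) = S),
      (∏ a : Fin k, (((Finset.univ.filter (fun i => e i = a.castSucc)).card : ℝ) / N) ^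
          (Finset.univ.filter (fun i => e i = a.castSucc)).card) *
        (((Finset.univ.filter (fun i => e i = Fin.last k)).card : ℝ) / N) ^
          (Finset.univ.filter (fun i => e i = Fin.last k)).card
      = ((S.card : ℝ)/N)^S.card *
        (∏ a : Fin k, (((Finset.univ.filter (fun i => e i = a.castSucc)).card : ℝ) / N) ^
          (Finset.univ.filter (fun i => e i = a.castSucc)).card) := by
    intro e he
    rw [Finset.mem_filter] at he
    rw [he.2, mul_comm]
  rw [Finset.sum_congr rfl hconst, ← Finset.mul_sum]
  congr 1
  -- now the bijection
  rw [W]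
  apply Finset.sum_bij (i := fun (e : ι → Fin (k+1))
      (he : e ∈ Finset.univ.filter
        (fun e : ι → Fin (k+1) => Finset.univ.filter (fun i => e i = Fin.last k) = S)) =>
      (fun j : {i : ι // i ∈ Sᶜ} => (e ↑j).castPred (by
        rw [Finset.mem_filter] at he
        have hj : (j : ι) ∉ S := Finset.mem_compl.mp j.2
        intro hlast
        apply hj
        have hmem : (↑j : ι) ∈ Finset.univ.filter (fun i => e i = Fin.last k) :=
          Finset.mem_filter.mpr ⟨Finset.mem_univ _, hlast⟩
        rwa [he.2] at hmem)))
  · intro e he; exact Finset.mem_univ _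
  · -- injectivity
    intro e₁ h₁ e₂ h₂ heq
    rw [Finset.mem_filter] at h₁ h₂
    funext x
    by_cases hx : x ∈ S
    · have k1 : e₁ x = Fin.last k :=
        (Finset.mem_filter.mp (show x ∈ Finset.univ.filter (fun i => e₁ i = Fin.last k) by
          rw [h₁.2]; exact hx)).2
      have k2 : e₂ x = Fin.last k :=
        (Finset.mem_filter.mp (show x ∈ Finset.univ.filter (fun i => e₂ i = Fin.last k) by
          rw [h₂.2]; exact hx)).2
      rw [k1, k2]
    · have hxc : x ∈ Sᶜ := Finset.mem_compl.mpr hx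
      have := congrFun heq ⟨x, hxc⟩
      simpa [Fin.castPred_inj] using this
  · -- surjectivity
    intro f _
    refine ⟨fun x => if h : x ∈ S then Fin.last k else
      (f ⟨x, Finset.mem_compl.mpr h⟩).castSucc, ?_, ?_⟩
    · rw [Finset.mem_filter]
      refine ⟨Finset.mem_univ _, ?_⟩
      ext x
      rw [Finset.mem_filter]
      by_cases hx : x ∈ S <;> simp [hx, (Fin.castSucc_lt_last _).ne]
    · funext j
      have hj : (j : ι) ∉ S := Finset.mem_compl.mp j.2
      simp [hj]
  · -- value equality
    intro e he
    apply Finset.prod_congr rfl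
    intro a _
    simp only [Fin.castPred_eq_iff_eq_castSucc]
    have hcard : (Finset.univ.filter (fun j : {i : ι // i ∈ Sᶜ} => e ↑j = a.castSucc)).card
        = (Finset.univ.filter (fun i : ι => e i = a.castSucc)).card := by
      apply card_filter_subtype Sᶜ (fun i => e i = a.castSucc)
      intro i hi
      rw [Finset.mem_filter] at he
      rw [Finset.mem_compl, ← he.2]
      simp [hi, (Fin.castSucc_lt_last a).ne]
    rw [hcard]

end

lemma W_normalize {ι : Type} [Fintype ι] [DecidableEq ι] (N k : ℕ) :
    W N k ι = ((Fintype.card ι : ℝ) / N) ^ (Fintype.card ι) * W (Fintype.card ι) k ι := by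
  rw [W, W, Finset.mul_sum]
  exact Finset.sum_congr rfl fun e _ => term_normalize N k e

lemma CMN_eq_W (n k : ℕ) : CMN n k = W n k (Fin n) := rfl

lemma W_eq_CMN {ι : Type} [Fintype ι] [DecidableEq ι] (k : ℕ) :
    W (Fintype.card ι) k ι = CMN (Fintype.card ι) k := by
  rw [CMN_eq_W]
  exact W_equiv _ _ (Fintype.equivFinOfCardEq rfl)

lemma CMN_rec (n k : ℕ) :
    CMN n (k+1) = ∑ m ∈ Finset.range (n+1),
      (n.choose m : ℝ) * (((m : ℝ)/n)^m * ((((n-m : ℕ)) : ℝ)/n)^(n-m) * CMN (n-m) k) := by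
  rw [CMN_eq_W, W_succ]
  have hterm : ∀ S : Finset (Fin n),
      ((S.card : ℝ)/n)^S.card * W n k {i : Fin n // i ∈ Sᶜ}
      = ((S.card : ℝ)/n)^S.card * (((n - S.card : ℕ) : ℝ)/n)^(n - S.card) * CMN (n - S.card) k := by
    intro S
    have hcard : Fintype.card {i : Fin n // i ∈ Sᶜ} = n - S.card := by
      simp [Fintype.card_coe, Finset.card_compl]
    rw [W_normalize (ι := {i : Fin n // i ∈ Sᶜ})]
    rw [W_eq_CMN, hcard, mul_assoc]
  rw [Finset.sum_congr rfl (fun S _ => hterm S)]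
  rw [← Finset.powerset_univ]
  calc ∑ S ∈ (Finset.univ : Finset (Fin n)).powerset,
        ((S.card : ℝ)/n)^S.card * (((n - S.card : ℕ) : ℝ)/n)^(n - S.card) * CMN (n - S.card) k
      = ∑ m ∈ Finset.range ((Finset.univ : Finset (Fin n)).card + 1),
          (Finset.univ : Finset (Fin n)).card.choose m •
            (((m : ℝ)/n)^m * (((n-m : ℕ) : ℝ)/n)^(n-m) * CMN (n-m) k) := by
        exact Finset.sum_powerset_apply_card (fun m => ((m : ℝ)/n)^m * (((n-m : ℕ) : ℝ)/n)^(n-m) * CMN (n-m) k)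
    _ = _ := by
        rw [Finset.card_univ, Fintype.card_fin]
        exact Finset.sum_congr rfl fun m _ => by rw [nsmul_eq_mul]


section
open Real

lemma st_lower (n : ℕ) (hn : 1 ≤ n) : Real.sqrt π ≤ Stirling.stirlingSeq n := by
  obtain ⟨m, rfl⟩ := Nat.exists_eq_add_of_le hn
  have h1 : Filter.Tendsto (Stirling.stirlingSeq ∘ Nat.succ) Filter.atTop (nhds (Real.sqrt π)) :=
    Stirling.tendsto_stirlingSeq_sqrt_pi.comp (Filter.tendsto_add_atTop_nat 1)
  have := Stirling.stirlingSeq'_antitone.le_of_tendsto h1 m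
  simpa [Nat.succ_eq_add_one, Nat.add_comm] using this

lemma st_upper (n : ℕ) (hn : 1 ≤ n) : Stirling.stirlingSeq n ≤ Real.exp 1 / Real.sqrt 2 := by
  obtain ⟨m, rfl⟩ := Nat.exists_eq_add_of_le hn
  have := Stirling.stirlingSeq'_antitone (Nat.zero_le m)
  simp only [Function.comp] at this
  rw [← Stirling.stirlingSeq_one]
  simpa [Nat.succ_eq_add_one, Nat.add_comm] using this

lemma fact_eq (j : ℕ) (hj : 1 ≤ j) :
    (Nat.factorial j : ℝ) = Stirling.stirlingSeq j * (Real.sqrt (2*j) * ((j:ℝ)/Real.exp 1)^j) := by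
  rw [Stirling.stirlingSeq]
  have h1 : (0:ℝ) < Real.sqrt (2*j) := Real.sqrt_pos.mpr (by positivity)
  have h2 : (0:ℝ) < ((j:ℝ)/Real.exp 1)^j := by
    have : (0:ℝ) < (j:ℝ) := by exact_mod_cast hj
    positivity
  field_simp

lemma st_ge_one (j : ℕ) (hj : 1 ≤ j) : 1 ≤ Stirling.stirlingSeq j := by
  refine le_trans ?_ (st_lower j hj)
  rw [show (1:ℝ) = Real.sqrt 1 by simp]
  exact Real.sqrt_le_sqrt (by linarith [Real.pi_gt_three])

lemma fact_lower (j : ℕ) (hj : 1 ≤ j) :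
    Real.sqrt (2*j) * ((j:ℝ)/Real.exp 1)^j ≤ (Nat.factorial j : ℝ) := by
  rw [fact_eq j hj]
  have h : (0:ℝ) ≤ Real.sqrt (2*j) * ((j:ℝ)/Real.exp 1)^j := by positivity
  nlinarith [st_ge_one j hj]

lemma fact_upper (j : ℕ) (hj : 1 ≤ j) :
    (Nat.factorial j : ℝ) ≤ (Real.exp 1 / Real.sqrt 2) * (Real.sqrt (2*j) * ((j:ℝ)/Real.exp 1)^j) := by
  rw [fact_eq j hj]
  have h : (0:ℝ) ≤ Real.sqrt (2*j) * ((j:ℝ)/Real.exp 1)^j := by positivity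
  nlinarith [st_upper j hj]

lemma binBound (m l : ℕ) (hm : 1 ≤ m) (hl : 1 ≤ l) :
    ((m+l).choose m : ℝ) * ((m:ℝ)/((m:ℝ)+(l:ℝ)))^m * ((l:ℝ)/((m:ℝ)+(l:ℝ)))^l
      ≤ 2 * (Real.sqrt ((m:ℝ)+(l:ℝ)) / (Real.sqrt m * Real.sqrt l)) := by
  have hmR : (0:ℝ) < m := by exact_mod_cast hm
  have hlR : (0:ℝ) < l := by exact_mod_cast hl
  have hcR : (0:ℝ) < (m:ℝ)+(l:ℝ) := by linarith
  have he : (0:ℝ) < Real.exp 1 := Real.exp_pos 1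
  have hs2 : (0:ℝ) < Real.sqrt 2 := Real.sqrt_pos.mpr (by norm_num)
  have hsm : (0:ℝ) < Real.sqrt m := Real.sqrt_pos.mpr hmR
  have hsl : (0:ℝ) < Real.sqrt l := Real.sqrt_pos.mpr hlR
  have hsn : (0:ℝ) < Real.sqrt ((m:ℝ)+(l:ℝ)) := Real.sqrt_pos.mpr hcR
  -- choose as factorial quotient
  have hch : ((m+l).choose m : ℝ)
      = (Nat.factorial (m+l) : ℝ) / ((Nat.factorial m : ℝ) * (Nat.factorial l : ℝ)) := by
    have h := Nat.choose_mul_factorial_mul_factorial (Nat.le_add_right m l)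
    have h' : (m+l).choose m * Nat.factorial m * Nat.factorial (m + l - m) = Nat.factorial (m+l) := h
    rw [Nat.add_sub_cancel_left] at h'
    have := congrArg (fun x : ℕ => (x : ℝ)) h'
    push_cast at this
    field_simp
    linarith [this]
  -- sqrt expansions
  have e2m : Real.sqrt (2*(m:ℝ)) = Real.sqrt 2 * Real.sqrt m := Real.sqrt_mul (by norm_num) _
  have e2l : Real.sqrt (2*(l:ℝ)) = Real.sqrt 2 * Real.sqrt l := Real.sqrt_mul (by norm_num) _
  have e2n : Real.sqrt (2*((m:ℝ)+(l:ℝ))) = Real.sqrt 2 * Real.sqrt ((m:ℝ)+(l:ℝ)) :=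
    Real.sqrt_mul (by norm_num) _
  -- factorial bounds
  have hupN := fact_upper (m+l) (by omega)
  have hloM := fact_lower m hm
  have hloL := fact_lower l hl
  push_cast at hupN
  set c := (m:ℝ)+(l:ℝ) with hc
  set e1 := Real.exp 1 with he1
  set UP := (e1 / Real.sqrt 2) * (Real.sqrt (2*c) * (c/e1)^(m+l)) with hUP
  set LOM := Real.sqrt (2*(m:ℝ)) * ((m:ℝ)/e1)^m with hLOM
  set LOL := Real.sqrt (2*(l:ℝ)) * ((l:ℝ)/e1)^l with hLOL
  have hLOMpos : 0 < LOM := by rw [hLOM]; positivity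
  have hLOLpos : 0 < LOL := by rw [hLOL]; positivity
  have hUPnn : 0 ≤ UP := by rw [hUP]; positivity
  have hdiv : (Nat.factorial (m+l) : ℝ) / ((Nat.factorial m : ℝ) * (Nat.factorial l : ℝ))
      ≤ UP / (LOM * LOL) := by
    apply div_le_div₀ hUPnn hupN (by positivity)
    have h1 : (0:ℝ) ≤ LOM := hLOMpos.le
    exact mul_le_mul hloM hloL hLOLpos.le (le_trans h1 hloM)
  have hP : (0:ℝ) ≤ ((m:ℝ)/c)^m * ((l:ℝ)/c)^l := by positivity
  have step1 : ((m+l).choose m : ℝ) * ((m:ℝ)/c)^m * ((l:ℝ)/c)^l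
      ≤ UP / (LOM * LOL) * (((m:ℝ)/c)^m * ((l:ℝ)/c)^l) := by
    rw [hch, mul_assoc]
    exact mul_le_mul_of_nonneg_right hdiv hP
  refine le_trans step1 ?_
  -- exact simplification
  have key : UP / (LOM * LOL) * (((m:ℝ)/c)^m * ((l:ℝ)/c)^l)
      = (e1 / (Real.sqrt 2 * Real.sqrt 2)) * (Real.sqrt c / (Real.sqrt m * Real.sqrt l)) := by
    rw [hUP, hLOM, hLOL, e2m, e2l, e2n]
    have hc0 : c ≠ 0 := ne_of_gt hcR
    have hm0 : (m:ℝ) ≠ 0 := ne_of_gt hmR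
    have hl0 : (l:ℝ) ≠ 0 := ne_of_gt hlR
    have he0 : e1 ≠ 0 := ne_of_gt he
    rw [div_pow, div_pow, div_pow, div_pow, div_pow, pow_add, pow_add]
    field_simp
  rw [key, Real.mul_self_sqrt (by norm_num : (0:ℝ) ≤ 2)]
  have hex : e1 ≤ 2.7182818286 := (Real.exp_one_lt_d9).le
  have : e1 / 2 ≤ 2 := by rw [he1] at hex ⊢; linarith
  have hq : (0:ℝ) ≤ Real.sqrt c / (Real.sqrt m * Real.sqrt l) := by positivity
  calc e1/2 * (Real.sqrt c / (Real.sqrt m * Real.sqrt l))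
      ≤ 2 * (Real.sqrt c / (Real.sqrt m * Real.sqrt l)) :=
        mul_le_mul_of_nonneg_right this hq
    _ = _ := rfl


lemma sqrt_le_of_sq (a b : ℝ) (hb : 0 ≤ b) (h : a ≤ b^2) : Real.sqrt a ≤ b := by
  calc Real.sqrt a ≤ Real.sqrt (b^2) := Real.sqrt_le_sqrt h
    _ = b := Real.sqrt_sq hb

lemma inv_sqrt_sum (n : ℕ) : ∑ m ∈ Finset.Icc 1 n, 1/Real.sqrt m ≤ 2 * Real.sqrt n := by
  induction n with
  | zero => simp
  | succ n ih =>
    rw [Finset.sum_Icc_succ_top (by omega : 1 ≤ n+1)]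
    have h1 : Real.sqrt ((n:ℝ)*((n:ℝ)+1)) ≤ (n:ℝ) + 1/2 :=
      sqrt_le_of_sq _ _ (by positivity) (by nlinarith)
    have h2 : Real.sqrt ((n:ℕ):ℝ) * Real.sqrt ((n:ℝ)+1) = Real.sqrt ((n:ℝ)*((n:ℝ)+1)) :=
      (Real.sqrt_mul (by positivity) _).symm
    have hsn1 : (0:ℝ) < Real.sqrt ((n:ℝ)+1) := Real.sqrt_pos.mpr (by positivity)
    have key : 1/Real.sqrt ((n:ℝ)+1) ≤ 2*Real.sqrt ((n:ℝ)+1) - 2*Real.sqrt n := by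
      rw [div_le_iff₀ hsn1]
      have hsq : Real.sqrt ((n:ℝ)+1) * Real.sqrt ((n:ℝ)+1) = (n:ℝ)+1 :=
        Real.mul_self_sqrt (by positivity)
      have expand : (2*Real.sqrt ((n:ℝ)+1) - 2*Real.sqrt n) * Real.sqrt ((n:ℝ)+1)
          = 2*((n:ℝ)+1) - 2*Real.sqrt ((n:ℝ)*((n:ℝ)+1)) := by
        rw [sub_mul, mul_assoc, hsq, mul_assoc, h2]
      rw [expand]
      linarith [h1]
    push_cast
    push_cast at ih
    linarith [key, ih]

lemma sqrt_add_le (x y : ℝ) (hx : 0 ≤ x) (hy : 0 ≤ y) :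
    Real.sqrt (x + y) ≤ Real.sqrt x + Real.sqrt y := by
  refine sqrt_le_of_sq _ _ (by positivity) ?_
  nlinarith [Real.sq_sqrt hx, Real.sq_sqrt hy, Real.sqrt_nonneg x, Real.sqrt_nonneg y]

lemma sum_b_le (n : ℕ) (hn : 1 ≤ n) :
    ∑ m ∈ Finset.range (n+1),
      (n.choose m : ℝ) * ((m:ℝ)/n)^m * (((n-m:ℕ):ℝ)/n)^(n-m)
      ≤ 10 * Real.sqrt n := by
  have hnR : (0:ℝ) < n := by exact_mod_cast hn
  have hsn : (1:ℝ) ≤ Real.sqrt n := by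
    rw [show (1:ℝ) = Real.sqrt 1 by simp]
    exact Real.sqrt_le_sqrt (by exact_mod_cast hn)
  rw [Finset.sum_range_succ, Finset.range_eq_Ico,
    Finset.sum_eq_sum_Ico_succ_bot (by omega : 0 < n)]
  have e0 : (n.choose 0 : ℝ) * (((0:ℕ):ℝ)/n)^(0:ℕ) * (((n-0:ℕ):ℝ)/n)^(n-0) = 1 := by
    simp [div_self (ne_of_gt hnR)]
  have en : (n.choose n : ℝ) * (((n:ℕ):ℝ)/n)^n * (((n-n:ℕ):ℝ)/n)^(n-n) = 1 := by
    simp [div_self (ne_of_gt hnR)]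
  have hmid : ∀ m ∈ Finset.Ico 1 n,
      (n.choose m : ℝ) * ((m:ℝ)/n)^m * (((n-m:ℕ):ℝ)/n)^(n-m)
        ≤ 2 * (1/Real.sqrt m + 1/Real.sqrt ((n-m:ℕ):ℝ)) := by
    intro m hm
    rw [Finset.mem_Ico] at hm
    obtain ⟨hm1, hmn⟩ := hm
    set l := n - m with hl
    have hl1 : 1 ≤ l := by omega
    have hml : m + l = n := by omega
    have hmR : (0:ℝ) < m := by exact_mod_cast hm1
    have hlR : (0:ℝ) < l := by exact_mod_cast hl1
    have hsm : (0:ℝ) < Real.sqrt m := Real.sqrt_pos.mpr hmR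
    have hsl : (0:ℝ) < Real.sqrt l := Real.sqrt_pos.mpr hlR
    have h1 : (n.choose m : ℝ) * ((m:ℝ)/n)^m * ((l:ℝ)/n)^l
        = ((m+l).choose m : ℝ) * ((m:ℝ)/((m:ℝ)+(l:ℝ)))^m * ((l:ℝ)/((m:ℝ)+(l:ℝ)))^l := by
      rw [← hml]
      push_cast
      ring
    rw [h1]
    refine le_trans (binBound m l hm1 hl1) ?_
    have h2 : Real.sqrt ((m:ℝ)+(l:ℝ)) ≤ Real.sqrt m + Real.sqrt l :=
      sqrt_add_le _ _ hmR.le hlR.le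
    have heq : (Real.sqrt m + Real.sqrt l) / (Real.sqrt m * Real.sqrt l)
        = 1/Real.sqrt m + 1/Real.sqrt l := by
      field_simp
      ring
    calc 2 * (Real.sqrt ((m:ℝ)+(l:ℝ)) / (Real.sqrt m * Real.sqrt l))
        ≤ 2 * ((Real.sqrt m + Real.sqrt l) / (Real.sqrt m * Real.sqrt l)) := by gcongr
      _ = 2 * (1/Real.sqrt m + 1/Real.sqrt l) := by rw [heq]
  have hsum1 : ∑ m ∈ Finset.Ico 1 n,
      (n.choose m : ℝ) * ((m:ℝ)/n)^m * (((n-m:ℕ):ℝ)/n)^(n-m)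
      ≤ ∑ m ∈ Finset.Ico 1 n, 2 * (1/Real.sqrt m + 1/Real.sqrt ((n-m:ℕ):ℝ)) :=
    Finset.sum_le_sum hmid
  have hrefl : ∑ m ∈ Finset.Ico 1 n, 1/Real.sqrt ((n-m:ℕ):ℝ)
      = ∑ m ∈ Finset.Ico 1 n, 1/Real.sqrt m := by
    refine Finset.sum_nbij' (i := fun m => n - m) (j := fun m => n - m) ?_ ?_ ?_ ?_ ?_ <;>
      intro m hm <;> simp only [Finset.mem_Ico] at hm ⊢ <;> try omega
  have hico : ∑ m ∈ Finset.Ico 1 n, 1/Real.sqrt m ≤ 2 * Real.sqrt n := by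
    refine le_trans (Finset.sum_le_sum_of_subset_of_nonneg ?_ ?_) (inv_sqrt_sum n)
    · intro x hx; rw [Finset.mem_Ico] at hx; rw [Finset.mem_Icc]; omega
    · intro i _ _; positivity
  have hmidsum : ∑ m ∈ Finset.Ico 1 n, 2 * (1/Real.sqrt m + 1/Real.sqrt ((n-m:ℕ):ℝ))
      ≤ 8 * Real.sqrt n := by
    rw [show (fun (m:ℕ) => 2 * (1/Real.sqrt (m:ℝ) + 1/Real.sqrt ((n-m:ℕ):ℝ))) = fun (m:ℕ) =>
      2 * (1/Real.sqrt (m:ℝ)) + 2* (1/Real.sqrt ((n-m:ℕ):ℝ)) by funext m; ring]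
    rw [Finset.sum_add_distrib, ← Finset.mul_sum, ← Finset.mul_sum, hrefl]
    linarith [hico]
  rw [e0, en]
  linarith [le_trans hsum1 hmidsum]

lemma CMN_nonneg (n k : ℕ) : 0 ≤ CMN n k := by
  apply Finset.sum_nonneg
  intro e _
  apply Finset.prod_nonneg
  intro a _
  positivity

lemma CMN_zero (k : ℕ) : CMN 0 k = 1 := by
  rw [CMN]
  push_cast
  have : ∀ e : Fin 0 → Fin k, ∏ a : Fin k,
      (((Finset.univ.filter (fun i => e i = a)).card : ℝ) / 0) ^
        (Finset.univ.filter (fun i => e i = a)).card = 1 := by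
    intro e
    apply Finset.prod_eq_one
    intro a _
    simp
  rw [Finset.sum_congr rfl (fun e _ => this e), Finset.sum_const, Finset.card_univ]
  simp

lemma CMN_one (n : ℕ) : CMN n 1 = 1 := by
  rw [CMN]
  have : ∀ e : Fin n → Fin 1, ∏ a : Fin 1,
      (((Finset.univ.filter (fun i => e i = a)).card : ℝ) / n) ^
        (Finset.univ.filter (fun i => e i = a)).card = 1 := by
    intro e
    apply Finset.prod_eq_one
    intro a _
    have hfil : Finset.univ.filter (fun i : Fin n => e i = a) = Finset.univ := by
      apply Finset.filter_true_of_mem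
      intro i _
      exact Subsingleton.elim _ _
    rw [hfil, Finset.card_univ, Fintype.card_fin]
    rcases Nat.eq_zero_or_pos n with h | h
    · simp [h]
    · rw [div_self (by exact_mod_cast h.ne' : (n:ℝ) ≠ 0), one_pow]
  rw [Finset.sum_congr rfl (fun e _ => this e), Finset.sum_const, Finset.card_univ]
  simp

lemma CMN_le (k : ℕ) (hk : 1 ≤ k) : ∃ c : ℝ, 1 ≤ c ∧ ∀ n : ℕ,
    CMN n k ≤ c * Real.sqrt (((n:ℝ)+1)^(k-1)) := by
  induction k with
  | zero => omega
  | succ k ih =>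
    rcases Nat.eq_zero_or_pos k with rfl | hk1
    · exact ⟨1, le_refl 1, fun n => by simp [CMN_one]⟩
    obtain ⟨c, hc1, hc⟩ := ih hk1
    refine ⟨10*c, by linarith, ?_⟩
    intro n
    rcases Nat.eq_zero_or_pos n with rfl | hn
    · rw [CMN_zero]
      have : Real.sqrt (((0:ℝ)+1)^k) = 1 := by norm_num
      simp only [Nat.add_sub_cancel, Nat.cast_zero, this]
      linarith
    -- main case
    simp only [Nat.add_sub_cancel]
    have hB : (0:ℝ) ≤ c * Real.sqrt (((n:ℝ)+1)^(k-1)) := by positivity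
    have hbnd : ∀ m ∈ Finset.range (n+1),
        (n.choose m : ℝ) * (((m : ℝ)/n)^m * ((((n-m : ℕ)) : ℝ)/n)^(n-m) * CMN (n-m) k)
        ≤ ((n.choose m : ℝ) * ((m:ℝ)/n)^m * (((n-m:ℕ):ℝ)/n)^(n-m)) *
            (c * Real.sqrt (((n:ℝ)+1)^(k-1))) := by
      intro m hm
      have hbm : (0:ℝ) ≤ (n.choose m : ℝ) * ((m:ℝ)/n)^m * (((n-m:ℕ):ℝ)/n)^(n-m) := by
        positivity
      have hmono : CMN (n-m) k ≤ c * Real.sqrt (((n:ℝ)+1)^(k-1)) := by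
        refine le_trans (hc (n-m)) ?_
        have h1 : (((n-m:ℕ):ℝ)+1)^(k-1) ≤ ((n:ℝ)+1)^(k-1) := by
          apply pow_le_pow_left₀ (by positivity)
          have : ((n-m:ℕ):ℝ) ≤ (n:ℝ) := by exact_mod_cast Nat.sub_le n m
          linarith
        have := Real.sqrt_le_sqrt h1
        nlinarith [Real.sqrt_nonneg ((((n-m:ℕ):ℝ)+1)^(k-1))]
      calc (n.choose m : ℝ) * (((m : ℝ)/n)^m * ((((n-m : ℕ)) : ℝ)/n)^(n-m) * CMN (n-m) k)
          = ((n.choose m : ℝ) * ((m:ℝ)/n)^m * (((n-m:ℕ):ℝ)/n)^(n-m)) * CMN (n-m) k := by ring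
        _ ≤ _ := mul_le_mul_of_nonneg_left hmono hbm |>.trans_eq rfl
    rw [CMN_rec]
    refine le_trans (Finset.sum_le_sum hbnd) ?_
    rw [← Finset.sum_mul]
    have hS := sum_b_le n hn
    have h2 : (∑ m ∈ Finset.range (n+1),
        (n.choose m : ℝ) * ((m:ℝ)/n)^m * (((n-m:ℕ):ℝ)/n)^(n-m)) *
          (c * Real.sqrt (((n:ℝ)+1)^(k-1)))
        ≤ (10 * Real.sqrt n) * (c * Real.sqrt (((n:ℝ)+1)^(k-1))) :=
      mul_le_mul_of_nonneg_right hS hB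
    refine le_trans h2 ?_
    have hsn : Real.sqrt (n:ℝ) ≤ Real.sqrt ((n:ℝ)+1) := Real.sqrt_le_sqrt (by linarith)
    have hmul : Real.sqrt ((n:ℝ)+1) * Real.sqrt (((n:ℝ)+1)^(k-1))
        = Real.sqrt (((n:ℝ)+1)^k) := by
      rw [← Real.sqrt_mul (by positivity)]
      congr 1
      rw [← pow_succ']
      congr 1
      omega
    have hfin : (10 * Real.sqrt n) * (c * Real.sqrt (((n:ℝ)+1)^(k-1)))
        ≤ (10 * Real.sqrt ((n:ℝ)+1)) * (c * Real.sqrt (((n:ℝ)+1)^(k-1))) := by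
      have : (0:ℝ) ≤ c * Real.sqrt (((n:ℝ)+1)^(k-1)) := hB
      nlinarith [Real.sqrt_nonneg ((n:ℝ))]
    refine le_trans hfin ?_
    calc (10 * Real.sqrt ((n:ℝ)+1)) * (c * Real.sqrt (((n:ℝ)+1)^(k-1)))
        = 10*c * (Real.sqrt ((n:ℝ)+1) * Real.sqrt (((n:ℝ)+1)^(k-1))) := by ring
      _ = 10*c * Real.sqrt (((n:ℝ)+1)^k) := by rw [hmul]
      _ ≤ 10*c * Real.sqrt (((n:ℝ)+1)^k) := le_refl _

lemma one_le_CMN (n k : ℕ) (hn : 1 ≤ n) (hk : 1 ≤ k) : 1 ≤ CMN n k := by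
  rw [CMN]
  have hterm : (∏ a : Fin k,
      (((Finset.univ.filter (fun i : Fin n => (fun _ : Fin n => (⟨0, hk⟩ : Fin k)) i = a)).card : ℝ) / n) ^
        (Finset.univ.filter (fun i : Fin n => (fun _ : Fin n => (⟨0, hk⟩ : Fin k)) i = a)).card) = 1 := by
    apply Finset.prod_eq_one
    intro a _
    by_cases ha : (⟨0, hk⟩ : Fin k) = a
    · have hfil : Finset.univ.filter (fun i : Fin n => (fun _ : Fin n => (⟨0, hk⟩ : Fin k)) i = a)
          = Finset.univ := Finset.filter_true_of_mem (fun i _ => ha)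
      rw [hfil, Finset.card_univ, Fintype.card_fin]
      rw [div_self (Nat.cast_pos.mpr hn).ne', one_pow]
    · have hfil : Finset.univ.filter (fun i : Fin n => (fun _ : Fin n => (⟨0, hk⟩ : Fin k)) i = a)
          = ∅ := Finset.filter_false_of_mem (fun i _ => ha)
      rw [hfil]
      simp
  calc (1:ℝ) = ∏ a : Fin k,
      (((Finset.univ.filter (fun i : Fin n => (fun _ : Fin n => (⟨0, hk⟩ : Fin k)) i = a)).card : ℝ) / n) ^
        (Finset.univ.filter (fun i : Fin n => (fun _ : Fin n => (⟨0, hk⟩ : Fin k)) i = a)).card := hterm.symm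
    _ ≤ _ := by
      apply Finset.single_le_sum (f := fun e : Fin n → Fin k => ∏ a : Fin k,
        (((Finset.univ.filter (fun i : Fin n => e i = a)).card : ℝ) / n) ^
          (Finset.univ.filter (fun i : Fin n => e i = a)).card)
        (fun e _ => Finset.prod_nonneg (fun a _ => by positivity))
        (Finset.mem_univ (fun _ : Fin n => (⟨0, hk⟩ : Fin k)))

/-- For every `k ≥ 1` there is a constant `c_k` depending only on `k` such that for all
`n ≥ 2`: `1 ≤ C_MN(n,k)` and `log C_MN(n,k) ≤ ((k-1)/2) log n + c_k`. -/
theorem CMN_bounds (k : ℕ) (hk : 1 ≤ k) :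
    ∃ c : ℝ, ∀ n : ℕ, 2 ≤ n →
      1 ≤ CMN n k ∧
      Real.log (CMN n k) ≤ (((k : ℝ) - 1)/2) * Real.log n + c := by
  obtain ⟨c₀, hc₀1, hc₀⟩ := CMN_le k hk
  refine ⟨Real.log c₀ + (((k:ℝ)-1)/2) * Real.log 2, ?_⟩
  intro n hn
  have h1 : 1 ≤ CMN n k := one_le_CMN n k (by omega) hk
  refine ⟨h1, ?_⟩
  have hpos : (0:ℝ) < CMN n k := lt_of_lt_of_le one_pos h1
  have hnR : (0:ℝ) < n := by exact_mod_cast (by omega : 0 < n)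
  have hXpos : (0:ℝ) < ((n:ℝ)+1)^(k-1) := by positivity
  have h2 : CMN n k ≤ c₀ * Real.sqrt (((n:ℝ)+1)^(k-1)) := hc₀ n
  have hlog : Real.log (CMN n k) ≤ Real.log (c₀ * Real.sqrt (((n:ℝ)+1)^(k-1))) :=
    Real.log_le_log hpos h2
  have hc₀pos : (0:ℝ) < c₀ := lt_of_lt_of_le one_pos hc₀1
  have hsplit : Real.log (c₀ * Real.sqrt (((n:ℝ)+1)^(k-1)))
      = Real.log c₀ + Real.log (((n:ℝ)+1)^(k-1)) / 2 := by
    rw [Real.log_mul hc₀pos.ne' (Real.sqrt_pos.mpr hXpos).ne', Real.log_sqrt hXpos.le]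
  have hpow : Real.log (((n:ℝ)+1)^(k-1)) = ((k:ℝ)-1) * Real.log ((n:ℝ)+1) := by
    rw [Real.log_pow]
    congr 1
    have : ((k-1:ℕ):ℝ) = (k:ℝ)-1 := by
      have := Nat.cast_sub hk (R := ℝ)
      simpa using this
    exact this
  have hlog2 : Real.log ((n:ℝ)+1) ≤ Real.log 2 + Real.log n := by
    have hle : (n:ℝ)+1 ≤ 2*n := by
      have : (2:ℝ) ≤ n := by exact_mod_cast hn
      linarith
    calc Real.log ((n:ℝ)+1) ≤ Real.log (2*n) := Real.log_le_log (by linarith) hle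
      _ = Real.log 2 + Real.log n := Real.log_mul (by norm_num) hnR.ne'
  have hknn : (0:ℝ) ≤ ((k:ℝ)-1)/2 := by
    have : (1:ℝ) ≤ k := by exact_mod_cast hk
    linarith
  have hmul : ((k:ℝ)-1)/2 * Real.log ((n:ℝ)+1) ≤ ((k:ℝ)-1)/2 * (Real.log 2 + Real.log n) :=
    mul_le_mul_of_nonneg_left hlog2 hknn
  rw [hsplit, hpow] at hlog
  nlinarith [hlog, hmul]

end
end
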